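/- (Quaternionic Laurent-coefficient formula.) Let I ∈ ℍ be an imaginary unit, p₀ ∈ ℍ, and 0 ≤ R₁ < R₂ ≤ ∞. Let (a_n)_{n∈ℤ} be quaternions lying in the slice ℂ_I such that for every s with R₁ < s < R₂ both series Σ_{n≥0} ‖a_n‖·sⁿ and Σ_{n≥1} ‖a_{−n}‖·s^{−n} converge. Define f(p) = Σ_{n=0}^∞ a_n·(p − p₀)ⁿ + Σ_{n=1}^∞ a_{−n}·(p − p₀)^{−n} for R₁ < ‖p − p₀‖ < R₂. Then for every r with R₁ < r < R₂, with γ(t) = p₀ + r·exp(t·I) on [0, 2π], and every integer n: ∫_0^{2π} (γ(t) − p₀)^{−(n+1)} * f(γ(t)) * γ'(t) dt = 2π·I·a_n. -/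

import Mathlib

open scoped Quaternion

lemma QL_unit (I : ℍ[ℝ]) (hI : I * I = -1) :
    I.re = 0 ∧ I.imI ^ 2 + I.imJ ^ 2 + I.imK ^ 2 = 1 := by
  have h1 := congrArg QuaternionAlgebra.re hI
  have h2 := congrArg QuaternionAlgebra.imI hI
  have h3 := congrArg QuaternionAlgebra.imJ hI
  have h4 := congrArg QuaternionAlgebra.imK hI
  simp [Quaternion.re_mul, Quaternion.imI_mul, Quaternion.imJ_mul, Quaternion.imK_mul] at h1 h2 h3 h4
  have hre : I.re = 0 := by nlinarith [sq_nonneg I.re, sq_nonneg I.imI, sq_nonneg I.imJ, sq_nonneg I.imK]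
  refine ⟨hre, by nlinarith [hre]⟩

lemma QL_norm_liftAux (I : ℍ[ℝ]) (hI : I * I = -1) (z : ℂ) :
    ‖Complex.liftAux I hI z‖ = ‖z‖ := by
  obtain ⟨hre, hs⟩ := QL_unit I hI
  have key : Quaternion.normSq (Complex.liftAux I hI z) = Complex.normSq z := by
    rw [Complex.liftAux_apply]
    rw [Quaternion.normSq_def', Complex.normSq_apply]
    simp only [Quaternion.re_add, Quaternion.imI_add, Quaternion.imJ_add, Quaternion.imK_add,
      Quaternion.re_smul, Quaternion.imI_smul, Quaternion.imJ_smul, Quaternion.imK_smul,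
      Quaternion.algebraMap_def, Quaternion.re_coe, Quaternion.imI_coe, Quaternion.imJ_coe,
      Quaternion.imK_coe, smul_eq_mul, hre]
    nlinarith [hs]
  have hq : ‖Complex.liftAux I hI z‖ * ‖Complex.liftAux I hI z‖ = ‖z‖ * ‖z‖ := by
    rw [← Quaternion.normSq_eq_norm_mul_self, key, Complex.normSq_eq_norm_sq, sq]
  exact (mul_self_inj (norm_nonneg _) (norm_nonneg _)).mp hq


open Complex in
lemma QL_integral_E (k : ℤ) :
    (∫ t in (0:ℝ)..(2 * Real.pi), Complex.exp ((k : ℂ) * t * Complex.I))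
      = if k = 0 then ((2 * Real.pi : ℝ) : ℂ) else 0 := by
  by_cases hk : k = 0
  · simp [hk]
  · rw [if_neg hk]
    have hc : (k : ℂ) * Complex.I ≠ 0 := by
      simp [Complex.I_ne_zero]
      exact_mod_cast hk
    have h1 : ∀ t : ℝ, (k : ℂ) * t * Complex.I = ((k : ℂ) * Complex.I) * t := fun t => by ring
    simp_rw [h1]
    rw [integral_exp_mul_complex hc]
    have h2 : Complex.exp ((k : ℂ) * Complex.I * ((2 * Real.pi : ℝ) : ℂ)) = 1 := by
      have : (k : ℂ) * Complex.I * ((2 * Real.pi : ℝ) : ℂ) = (k : ℤ) * (2 * Real.pi * Complex.I) := by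
        push_cast; ring
      rw [this, Complex.exp_int_mul_two_pi_mul_I]
    rw [h2]
    simp

lemma QL_key (r : ℝ) (hr : 0 < r) (b : ℤ → ℂ)
    (hpos : Summable fun m : ℕ => ‖b (m : ℤ)‖ * r ^ m)
    (hneg : Summable fun m : ℕ => ‖b (-(m : ℤ) - 1)‖ * r⁻¹ ^ (m + 1)) (n : ℤ) :
    IntervalIntegrable (fun t : ℝ =>
        ((r : ℂ) * Complex.exp (t * Complex.I)) ^ (-(n + 1)) *
        ((∑' m : ℕ, b (m : ℤ) * ((r : ℂ) * Complex.exp (t * Complex.I)) ^ m)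
          + ∑' m : ℕ, b (-(m : ℤ) - 1) * (((r : ℂ) * Complex.exp (t * Complex.I))⁻¹) ^ (m + 1)) *
        ((r : ℂ) * (Complex.I * Complex.exp (t * Complex.I)))) MeasureTheory.volume 0 (2 * Real.pi)
    ∧ (∫ t in (0:ℝ)..(2 * Real.pi),
        ((r : ℂ) * Complex.exp (t * Complex.I)) ^ (-(n + 1)) *
        ((∑' m : ℕ, b (m : ℤ) * ((r : ℂ) * Complex.exp (t * Complex.I)) ^ m)
          + ∑' m : ℕ, b (-(m : ℤ) - 1) * (((r : ℂ) * Complex.exp (t * Complex.I))⁻¹) ^ (m + 1)) *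
        ((r : ℂ) * (Complex.I * Complex.exp (t * Complex.I))))
      = ((2 * Real.pi : ℝ) : ℂ) * (Complex.I * b n) := by
  have hrC : (r : ℂ) ≠ 0 := by exact_mod_cast hr.ne'
  have hrne : r ≠ 0 := hr.ne'
  set E : ℤ → ℝ → ℂ := fun k t => Complex.exp ((k : ℂ) * t * Complex.I) with hE
  set FPos : ℕ → ℝ → ℂ := fun m t => Complex.I * b (m : ℤ) * ((r : ℂ) ^ ((m : ℤ) - n) * E ((m : ℤ) - n) t) with hFPos
  set FNeg : ℕ → ℝ → ℂ := fun m t => Complex.I * b (-(m : ℤ) - 1) * ((r : ℂ) ^ (-(m : ℤ) - 1 - n) * E (-(m : ℤ) - 1 - n) t) with hFNeg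
  have hzne : ∀ t : ℝ, (r : ℂ) * Complex.exp (t * Complex.I) ≠ 0 :=
    fun t => mul_ne_zero hrC (Complex.exp_ne_zero _)
  have hzk : ∀ (k : ℤ) (t : ℝ), ((r : ℂ) * Complex.exp (t * Complex.I)) ^ k
      = (r : ℂ) ^ k * E k t := by
    intro k t
    rw [mul_zpow]
    congr 1
    rw [hE]
    simp only
    rw [← Complex.exp_int_mul, mul_assoc]
  -- pointwise identity
  have hpt : ∀ t : ℝ,
      ((r : ℂ) * Complex.exp (t * Complex.I)) ^ (-(n + 1)) *
        ((∑' m : ℕ, b (m : ℤ) * ((r : ℂ) * Complex.exp (t * Complex.I)) ^ m)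
          + ∑' m : ℕ, b (-(m : ℤ) - 1) * (((r : ℂ) * Complex.exp (t * Complex.I))⁻¹) ^ (m + 1)) *
        ((r : ℂ) * (Complex.I * Complex.exp (t * Complex.I)))
      = (∑' m : ℕ, FPos m t) + (∑' m : ℕ, FNeg m t) := by
    intro t
    set z : ℂ := (r : ℂ) * Complex.exp (t * Complex.I) with hzdef
    have hz0 : z ≠ 0 := hzne t
    rw [mul_add, add_mul]
    congr 1
    · rw [← tsum_mul_left, ← tsum_mul_right]
      refine tsum_congr fun m => ?_
      have h1 : (r : ℂ) * (Complex.I * Complex.exp (t * Complex.I)) = Complex.I * z := by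
        rw [hzdef]; ring
      have h2 : z ^ (-(n + 1)) * (b (m : ℤ) * z ^ m) * (Complex.I * z)
          = Complex.I * b (m : ℤ) * z ^ ((m : ℤ) - n) := by
        have h3 : ((m : ℤ) - n) = -(n + 1) + (m : ℤ) + 1 := by ring
        rw [h3, zpow_add₀ hz0, zpow_add₀ hz0, zpow_one, zpow_natCast]
        ring
      rw [h1, h2, hzk]
    · rw [← tsum_mul_left, ← tsum_mul_right]
      refine tsum_congr fun m => ?_
      have h1 : (r : ℂ) * (Complex.I * Complex.exp (t * Complex.I)) = Complex.I * z := by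
        rw [hzdef]; ring
      have h4 : (z⁻¹) ^ (m + 1) = z ^ (-((m : ℤ) + 1)) := by
        rw [inv_pow, ← zpow_natCast z (m + 1), ← zpow_neg]
        congr 1
      have h2 : z ^ (-(n + 1)) * (b (-(m : ℤ) - 1) * z ^ (-((m : ℤ) + 1))) * (Complex.I * z)
          = Complex.I * b (-(m : ℤ) - 1) * z ^ (-(m : ℤ) - 1 - n) := by
        have h3 : (-(m : ℤ) - 1 - n) = -(n + 1) + (-((m : ℤ) + 1)) + 1 := by ring
        rw [h3, zpow_add₀ hz0, zpow_add₀ hz0, zpow_one]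
        ring
      rw [h1, h4, h2, hzk]
  -- norms
  have hEnorm : ∀ (k : ℤ) (t : ℝ), ‖E k t‖ = 1 := by
    intro k t
    rw [hE]
    simp only
    have : ((k : ℂ) * t * Complex.I) = (((k : ℝ) * t : ℝ) : ℂ) * Complex.I := by push_cast; ring
    rw [this, Complex.norm_exp_ofReal_mul_I]
  have hrzpow : ∀ k : ℤ, ‖(r : ℂ) ^ k‖ = r ^ k := by
    intro k
    rw [norm_zpow, Complex.norm_real, Real.norm_eq_abs, abs_of_pos hr]
  have hnormPos : ∀ (m : ℕ) (t : ℝ), ‖FPos m t‖ = ‖b (m : ℤ)‖ * r ^ ((m : ℤ) - n) := by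
    intro m t
    rw [hFPos]
    simp only [norm_mul, hEnorm, hrzpow, Complex.norm_I]
    ring
  have hnormNeg : ∀ (m : ℕ) (t : ℝ), ‖FNeg m t‖ = ‖b (-(m : ℤ) - 1)‖ * r ^ (-(m : ℤ) - 1 - n) := by
    intro m t
    rw [hFNeg]
    simp only [norm_mul, hEnorm, hrzpow, Complex.norm_I]
    ring
  -- summability of the bounds
  have huPos : Summable (fun m : ℕ => ‖b (m : ℤ)‖ * r ^ ((m : ℤ) - n)) := by
    have : ∀ m : ℕ, ‖b (m : ℤ)‖ * r ^ ((m : ℤ) - n) = (‖b (m : ℤ)‖ * r ^ m) * r ^ (-n) := by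
      intro m
      rw [sub_eq_add_neg, zpow_add₀ hrne, zpow_natCast]
      ring
    simp_rw [this]
    exact hpos.mul_right _
  have huNeg : Summable (fun m : ℕ => ‖b (-(m : ℤ) - 1)‖ * r ^ (-(m : ℤ) - 1 - n)) := by
    have : ∀ m : ℕ, ‖b (-(m : ℤ) - 1)‖ * r ^ (-(m : ℤ) - 1 - n)
        = (‖b (-(m : ℤ) - 1)‖ * r⁻¹ ^ (m + 1)) * r ^ (-n) := by
      intro m
      have h6 : (-(m : ℤ) - 1 - n) = (-((m : ℤ) + 1)) + (-n) := by ring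
      have h5 : (r ^ ((m : ℤ) + 1))⁻¹ = r⁻¹ ^ (m + 1) := by
        rw [show ((m : ℤ) + 1) = ((m + 1 : ℕ) : ℤ) by push_cast; ring, zpow_natCast, inv_pow]
      rw [h6, zpow_add₀ hrne, zpow_neg, h5]
      ring
    simp_rw [this]
    exact hneg.mul_right _
  -- continuity
  have hEcont : ∀ k : ℤ, Continuous (E k) := by
    intro k
    rw [hE]
    exact Complex.continuous_exp.comp (by continuity)
  have hFcPos : ∀ m : ℕ, Continuous (FPos m) := by
    intro m; rw [hFPos]; exact (continuous_const.mul ((continuous_const.mul (hEcont _))))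
  have hFcNeg : ∀ m : ℕ, Continuous (FNeg m) := by
    intro m; rw [hFNeg]; exact (continuous_const.mul ((continuous_const.mul (hEcont _))))
  have hScontPos : Continuous (fun t : ℝ => ∑' m : ℕ, FPos m t) :=
    continuous_tsum hFcPos huPos (fun m t => le_of_eq (hnormPos m t))
  have hScontNeg : Continuous (fun t : ℝ => ∑' m : ℕ, FNeg m t) :=
    continuous_tsum hFcNeg huNeg (fun m t => le_of_eq (hnormNeg m t))
  have hfun : (fun t : ℝ =>
      ((r : ℂ) * Complex.exp (t * Complex.I)) ^ (-(n + 1)) *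
        ((∑' m : ℕ, b (m : ℤ) * ((r : ℂ) * Complex.exp (t * Complex.I)) ^ m)
          + ∑' m : ℕ, b (-(m : ℤ) - 1) * (((r : ℂ) * Complex.exp (t * Complex.I))⁻¹) ^ (m + 1)) *
        ((r : ℂ) * (Complex.I * Complex.exp (t * Complex.I))))
      = fun t : ℝ => (∑' m : ℕ, FPos m t) + (∑' m : ℕ, FNeg m t) := funext hpt
  constructor
  · rw [hfun]
    exact (hScontPos.add hScontNeg).intervalIntegrable _ _
  rw [hfun]
  have h2π : (0 : ℝ) ≤ 2 * Real.pi := by positivity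
  -- split the integral
  rw [intervalIntegral.integral_add (hScontPos.intervalIntegrable _ _) (hScontNeg.intervalIntegrable _ _)]
  -- swap sums and integrals
  have hswapPos : (∫ t in (0:ℝ)..(2 * Real.pi), ∑' m : ℕ, FPos m t)
      = ∑' m : ℕ, ∫ t in (0:ℝ)..(2 * Real.pi), FPos m t := by
    rw [intervalIntegral.integral_of_le h2π]
    simp_rw [intervalIntegral.integral_of_le h2π]
    refine (MeasureTheory.integral_tsum_of_summable_integral_norm
      (fun m => ((hFcPos m).integrableOn_Ioc)) ?_).symm
    have : ∀ m : ℕ, (∫ t in Set.Ioc (0:ℝ) (2 * Real.pi), ‖FPos m t‖)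
        = (2 * Real.pi) * (‖b (m : ℤ)‖ * r ^ ((m : ℤ) - n)) := by
      intro m
      simp_rw [hnormPos]
      rw [MeasureTheory.setIntegral_const, Real.volume_real_Ioc_of_le h2π, smul_eq_mul, sub_zero]
    simp_rw [this]
    exact huPos.mul_left _
  have hswapNeg : (∫ t in (0:ℝ)..(2 * Real.pi), ∑' m : ℕ, FNeg m t)
      = ∑' m : ℕ, ∫ t in (0:ℝ)..(2 * Real.pi), FNeg m t := by
    rw [intervalIntegral.integral_of_le h2π]
    simp_rw [intervalIntegral.integral_of_le h2π]
    refine (MeasureTheory.integral_tsum_of_summable_integral_norm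
      (fun m => ((hFcNeg m).integrableOn_Ioc)) ?_).symm
    have : ∀ m : ℕ, (∫ t in Set.Ioc (0:ℝ) (2 * Real.pi), ‖FNeg m t‖)
        = (2 * Real.pi) * (‖b (-(m : ℤ) - 1)‖ * r ^ (-(m : ℤ) - 1 - n)) := by
      intro m
      simp_rw [hnormNeg]
      rw [MeasureTheory.setIntegral_const, Real.volume_real_Ioc_of_le h2π, smul_eq_mul, sub_zero]
    simp_rw [this]
    exact huNeg.mul_left _
  rw [hswapPos, hswapNeg]
  -- compute each integral
  have hintPos : ∀ m : ℕ, (∫ t in (0:ℝ)..(2 * Real.pi), FPos m t)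
      = if (m : ℤ) = n then ((2 * Real.pi : ℝ) : ℂ) * (Complex.I * b n) else 0 := by
    intro m
    have : FPos m = fun t => (Complex.I * b (m : ℤ) * (r : ℂ) ^ ((m : ℤ) - n)) * E ((m : ℤ) - n) t := by
      funext t; rw [hFPos]; ring
    rw [this, intervalIntegral.integral_const_mul, hE]
    simp only
    rw [QL_integral_E]
    by_cases hmn : (m : ℤ) = n
    · rw [if_pos (by omega), if_pos hmn, hmn, sub_self, zpow_zero]
      ring
    · rw [if_neg (by omega), if_neg hmn, mul_zero]
  have hintNeg : ∀ m : ℕ, (∫ t in (0:ℝ)..(2 * Real.pi), FNeg m t)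
      = if (-(m : ℤ) - 1) = n then ((2 * Real.pi : ℝ) : ℂ) * (Complex.I * b n) else 0 := by
    intro m
    have : FNeg m = fun t => (Complex.I * b (-(m : ℤ) - 1) * (r : ℂ) ^ (-(m : ℤ) - 1 - n)) * E (-(m : ℤ) - 1 - n) t := by
      funext t; rw [hFNeg]; ring
    rw [this, intervalIntegral.integral_const_mul, hE]
    simp only
    rw [QL_integral_E]
    by_cases hmn : (-(m : ℤ) - 1) = n
    · rw [if_pos (by omega), if_pos hmn, hmn, sub_self, zpow_zero]
      ring
    · rw [if_neg (by omega), if_neg hmn, mul_zero]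
  simp_rw [hintPos, hintNeg]
  by_cases hn : 0 ≤ n
  · have hsum1 : (∑' m : ℕ, if (m : ℤ) = n then ((2 * Real.pi : ℝ) : ℂ) * (Complex.I * b n) else 0)
        = ((2 * Real.pi : ℝ) : ℂ) * (Complex.I * b n) := by
      rw [tsum_eq_single n.toNat]
      · rw [if_pos (by omega)]
      · intro m hm
        rw [if_neg (by omega)]
    have hsum2 : (∑' m : ℕ, if (-(m : ℤ) - 1) = n then ((2 * Real.pi : ℝ) : ℂ) * (Complex.I * b n) else 0)
        = 0 := by
      have hz : ∀ m : ℕ, (if (-(m : ℤ) - 1) = n then ((2 * Real.pi : ℝ) : ℂ) * (Complex.I * b n) else 0) = 0 :=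
        fun m => if_neg (by omega)
      simp_rw [hz]
      exact tsum_zero
    rw [hsum1, hsum2, add_zero]
  · have hsum1 : (∑' m : ℕ, if (m : ℤ) = n then ((2 * Real.pi : ℝ) : ℂ) * (Complex.I * b n) else 0)
        = 0 := by
      have hz : ∀ m : ℕ, (if (m : ℤ) = n then ((2 * Real.pi : ℝ) : ℂ) * (Complex.I * b n) else 0) = 0 :=
        fun m => if_neg (by omega)
      simp_rw [hz]
      exact tsum_zero
    have hsum2 : (∑' m : ℕ, if (-(m : ℤ) - 1) = n then ((2 * Real.pi : ℝ) : ℂ) * (Complex.I * b n) else 0)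
        = ((2 * Real.pi : ℝ) : ℂ) * (Complex.I * b n) := by
      rw [tsum_eq_single (-n - 1).toNat]
      · rw [if_pos (by omega)]
      · intro m hm
        rw [if_neg (by omega)]
    rw [hsum1, hsum2, zero_add]

theorem quaternion_laurent_coefficient_formula
    (I : ℍ[ℝ]) (hI : I * I = -1) (p₀ : ℍ[ℝ])
    (R₁ : ℝ) (R₂ : ENNReal) (hR₁ : 0 ≤ R₁) (hR₁₂ : ENNReal.ofReal R₁ < R₂)
    (a : ℤ → ℍ[ℝ]) (ha : ∀ n : ℤ, ∃ x v : ℝ, a n = (x : ℍ[ℝ]) + v • I)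
    (hsumPos : ∀ s : ℝ, R₁ < s → ENNReal.ofReal s < R₂ →
      Summable (fun n : ℕ => ‖a (n : ℤ)‖ * s ^ n))
    (hsumNeg : ∀ s : ℝ, R₁ < s → ENNReal.ofReal s < R₂ →
      Summable (fun n : ℕ => ‖a (-(n : ℤ) - 1)‖ * s⁻¹ ^ (n + 1)))
    (f : ℍ[ℝ] → ℍ[ℝ])
    (hf : ∀ p : ℍ[ℝ], R₁ < ‖p - p₀‖ → ENNReal.ofReal ‖p - p₀‖ < R₂ →
      f p = (∑' n : ℕ, a (n : ℤ) * (p - p₀) ^ n)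
        + ∑' n : ℕ, a (-(n : ℤ) - 1) * ((p - p₀)⁻¹) ^ (n + 1))
    (r : ℝ) (hr₁ : R₁ < r) (hr₂ : ENNReal.ofReal r < R₂)
    (γ γ' : ℝ → ℍ[ℝ])
    (hγ : ∀ t, γ t = p₀ + r • NormedSpace.exp (t • I))
    (hγ' : ∀ t, γ' t = r • (I * NormedSpace.exp (t • I)))
    (n : ℤ) :
    ∫ t in (0:ℝ)..(2 * Real.pi), (γ t - p₀) ^ (-(n + 1)) * f (γ t) * γ' t
      = (2 * Real.pi) • (I * a n) := by
  have hrpos : 0 < r := lt_of_le_of_lt hR₁ hr₁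
  set φ : ℂ →ₐ[ℝ] ℍ[ℝ] := Complex.liftAux I hI with hφdef
  let L : ℂ →L[ℝ] ℍ[ℝ] :=
    { toLinearMap := φ.toLinearMap
      cont := φ.toLinearMap.continuous_of_finiteDimensional }
  have hLφ : ∀ w : ℂ, L w = φ w := fun _ => rfl
  have hφc : Continuous φ := L.continuous
  have hφI : φ Complex.I = I := Complex.liftAux_apply_I I hI
  have hφnorm : ∀ w : ℂ, ‖φ w‖ = ‖w‖ := QL_norm_liftAux I hI
  have hbex : ∀ m : ℤ, ∃ w : ℂ, φ w = a m := by
    intro m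
    obtain ⟨x, v, hx⟩ := ha m
    refine ⟨(x : ℂ) + (v : ℂ) * Complex.I, ?_⟩
    rw [map_add, map_mul, hφI, hx]
    congr 1
    · rw [hφdef, Complex.liftAux_apply]
      simp [Quaternion.algebraMap_def]
    · rw [hφdef, Complex.liftAux_apply]
      simp only [Complex.ofReal_re, Complex.ofReal_im, zero_smul, add_zero,
        Quaternion.algebraMap_def]
      exact Quaternion.coe_mul_eq_smul v I
  choose b hbm using hbex
  have hbnorm : ∀ m : ℤ, ‖b m‖ = ‖a m‖ := fun m => by rw [← hbm m, hφnorm]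
  -- the exponential through φ
  have hexp : ∀ t : ℝ, NormedSpace.exp (t • I) = φ (Complex.exp ((t : ℂ) * Complex.I)) := by
    intro t
    have h1 : Complex.exp ((t : ℂ) * Complex.I) = NormedSpace.exp ((t : ℂ) * Complex.I) := by
      rw [Complex.exp_eq_exp_ℂ]
    rw [h1, NormedSpace.map_exp φ hφc]
    congr 1
    rw [show ((t : ℂ) * Complex.I) = t • Complex.I from (Complex.real_smul).symm,
      map_smul, hφI]
  have hz : ∀ t : ℝ, γ t - p₀ = φ ((r : ℂ) * Complex.exp ((t : ℂ) * Complex.I)) := by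
    intro t
    rw [hγ t, add_sub_cancel_left, hexp t,
      show ((r : ℂ) * Complex.exp ((t : ℂ) * Complex.I))
          = r • Complex.exp ((t : ℂ) * Complex.I) from (Complex.real_smul).symm,
      map_smul]
  have hznorm : ∀ t : ℝ, ‖γ t - p₀‖ = r := by
    intro t
    rw [hz t, hφnorm, norm_mul, Complex.norm_real, Real.norm_eq_abs, abs_of_pos hrpos,
      Complex.norm_exp_ofReal_mul_I, mul_one]
  -- summability of complex coefficients
  have hbpos : Summable fun m : ℕ => ‖b (m : ℤ)‖ * r ^ m := by
    simp_rw [hbnorm]; exact hsumPos r hr₁ hr₂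
  have hbneg : Summable fun m : ℕ => ‖b (-(m : ℤ) - 1)‖ * r⁻¹ ^ (m + 1) := by
    simp_rw [hbnorm]; exact hsumNeg r hr₁ hr₂
  -- f along the curve
  have hfγ : ∀ t : ℝ, f (γ t)
      = φ ((∑' m : ℕ, b (m : ℤ) * ((r : ℂ) * Complex.exp ((t : ℂ) * Complex.I)) ^ m)
          + ∑' m : ℕ, b (-(m : ℤ) - 1)
              * (((r : ℂ) * Complex.exp ((t : ℂ) * Complex.I))⁻¹) ^ (m + 1)) := by
    intro t
    have hzn : ‖(r : ℂ) * Complex.exp ((t : ℂ) * Complex.I)‖ = r := by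
      rw [norm_mul, Complex.norm_real, Real.norm_eq_abs, abs_of_pos hrpos,
        Complex.norm_exp_ofReal_mul_I, mul_one]
    rw [hf (γ t) (by rw [hznorm t]; exact hr₁) (by rw [hznorm t]; exact hr₂), map_add]
    congr 1
    · have hsum : Summable fun m : ℕ =>
          b (m : ℤ) * ((r : ℂ) * Complex.exp ((t : ℂ) * Complex.I)) ^ m := by
        apply Summable.of_norm
        have heq : ∀ m : ℕ, ‖b (m : ℤ) * ((r : ℂ) * Complex.exp ((t : ℂ) * Complex.I)) ^ m‖
            = ‖a (m : ℤ)‖ * r ^ m := by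
          intro m
          rw [norm_mul, norm_pow, hzn, hbnorm]
        simp_rw [heq]
        exact hsumPos r hr₁ hr₂
      have hterm : ∀ m : ℕ, a (m : ℤ) * (γ t - p₀) ^ m
          = L (b (m : ℤ) * ((r : ℂ) * Complex.exp ((t : ℂ) * Complex.I)) ^ m) := by
        intro m
        rw [hLφ, map_mul, map_pow, hbm, hz t]
      rw [tsum_congr hterm, ← L.map_tsum hsum, hLφ]
    · have hsum : Summable fun m : ℕ =>
          b (-(m : ℤ) - 1) * (((r : ℂ) * Complex.exp ((t : ℂ) * Complex.I))⁻¹) ^ (m + 1) := by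
        apply Summable.of_norm
        have heq : ∀ m : ℕ,
            ‖b (-(m : ℤ) - 1) * (((r : ℂ) * Complex.exp ((t : ℂ) * Complex.I))⁻¹) ^ (m + 1)‖
            = ‖a (-(m : ℤ) - 1)‖ * r⁻¹ ^ (m + 1) := by
          intro m
          rw [norm_mul, norm_pow, norm_inv, hzn, hbnorm]
        simp_rw [heq]
        exact hsumNeg r hr₁ hr₂
      have hterm : ∀ m : ℕ, a (-(m : ℤ) - 1) * ((γ t - p₀)⁻¹) ^ (m + 1)
          = L (b (-(m : ℤ) - 1) * (((r : ℂ) * Complex.exp ((t : ℂ) * Complex.I))⁻¹) ^ (m + 1)) := by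
        intro m
        rw [hLφ, map_mul, map_pow, map_inv₀, hbm, hz t]
      rw [tsum_congr hterm, ← L.map_tsum hsum, hLφ]
  -- derivative along the curve
  have hγ'φ : ∀ t : ℝ, γ' t
      = φ ((r : ℂ) * (Complex.I * Complex.exp ((t : ℂ) * Complex.I))) := by
    intro t
    rw [hγ' t, hexp t,
      show ((r : ℂ) * (Complex.I * Complex.exp ((t : ℂ) * Complex.I)))
          = r • (Complex.I * Complex.exp ((t : ℂ) * Complex.I)) from (Complex.real_smul).symm,
      map_smul, map_mul, hφI]
  -- pointwise identity for the integrand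
  have hpt : ∀ t : ℝ, (γ t - p₀) ^ (-(n + 1)) * f (γ t) * γ' t
      = L (((r : ℂ) * Complex.exp ((t : ℂ) * Complex.I)) ^ (-(n + 1)) *
        ((∑' m : ℕ, b (m : ℤ) * ((r : ℂ) * Complex.exp ((t : ℂ) * Complex.I)) ^ m)
          + ∑' m : ℕ, b (-(m : ℤ) - 1)
              * (((r : ℂ) * Complex.exp ((t : ℂ) * Complex.I))⁻¹) ^ (m + 1)) *
        ((r : ℂ) * (Complex.I * Complex.exp ((t : ℂ) * Complex.I)))) := by
    intro t
    rw [hLφ, map_mul, map_mul, ← hfγ t, ← hγ'φ t, hz t, ← map_zpow₀]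
  obtain ⟨hGint, hGval⟩ := QL_key r hrpos b hbpos hbneg n
  rw [intervalIntegral.integral_congr (g := fun t : ℝ =>
      L (((r : ℂ) * Complex.exp ((t : ℂ) * Complex.I)) ^ (-(n + 1)) *
        ((∑' m : ℕ, b (m : ℤ) * ((r : ℂ) * Complex.exp ((t : ℂ) * Complex.I)) ^ m)
          + ∑' m : ℕ, b (-(m : ℤ) - 1)
              * (((r : ℂ) * Complex.exp ((t : ℂ) * Complex.I))⁻¹) ^ (m + 1)) *
        ((r : ℂ) * (Complex.I * Complex.exp ((t : ℂ) * Complex.I)))))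
    (fun t _ => hpt t)]
  rw [L.intervalIntegral_comp_comm hGint, hGval]
  rw [show (((2 * Real.pi : ℝ) : ℂ) * (Complex.I * b n))
      = (2 * Real.pi : ℝ) • (Complex.I * b n) from (Complex.real_smul).symm,
    map_smul, hLφ, map_mul, hφI, hbm]
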